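/- Under Assumption (Lip), for every Q : 𝒳×𝒜 → ℝ and every μ, μ' ∈ Δ(𝒳), ‖T₂(Q,μ) − T₂(Q,μ')‖∞ ≤ (L_f + γ L_p‖Q‖∞)·‖μ − μ'‖₁. -/

import Mathlib

open Finset Filter
open scoped Classical

noncomputable section

variable {X A : Type*}

/-- A probability vector on a finite set. -/
def IsProb [Fintype X] (μ : X → ℝ) : Prop := (∀ x, 0 ≤ μ x) ∧ ∑ x, μ x = 1

/-- ℓ¹ norm of a signed measure / vector on a finite set. -/
def l1 [Fintype X] (μ : X → ℝ) : ℝ := ∑ x, |μ x|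

/-- Sup norm of a Q-table. -/
def supQ [Fintype X] [Fintype A] [Nonempty X] [Nonempty A] (Q : X → A → ℝ) : ℝ :=
  Finset.univ.sup' Finset.univ_nonempty (fun xa : X × A => |Q xa.1 xa.2|)

/-- Minimum of a row of a Q-table (minimum over actions). -/
def minRow [Fintype A] [Nonempty A] (q : A → ℝ) : ℝ :=
  Finset.univ.inf' Finset.univ_nonempty q

/-- The soft-min distribution over actions with parameter φ. -/
def softmin [Fintype A] (φ : ℝ) (z : A → ℝ) (a : A) : ℝ :=
  Real.exp (-φ * z a) / ∑ a', Real.exp (-φ * z a')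

/-- The argmin_e policy: uniform over the minimizers, zero elsewhere. -/
def argminE [Fintype A] [Nonempty A] (q : A → ℝ) (a : A) : ℝ :=
  if q a = minRow q then (1 : ℝ) / (Finset.univ.filter fun a' => q a' = minRow q).card else 0

/-- (P^{π,μ} ν)(x) = ∑_{x'} ν(x') ∑_a π(a|x') p(x|x',a,μ). -/
def Ppush [Fintype X] [Fintype A] (p : X → A → (X → ℝ) → X → ℝ)
    (π : X → A → ℝ) (μ ν : X → ℝ) (x : X) : ℝ :=
  ∑ x', ν x' * ∑ a, π x' a * p x' a μ x

/-- P₂(Q,μ) = P^{softmin_φ Q, μ} μ − μ. -/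
def P2 [Fintype X] [Fintype A] (φ : ℝ) (p : X → A → (X → ℝ) → X → ℝ)
    (Q : X → A → ℝ) (μ : X → ℝ) (x : X) : ℝ :=
  Ppush p (fun x' => softmin φ (Q x')) μ μ x - μ x

/-- The Bellman operator (B_μ Q)(x,a) = f(x,a,μ) + γ ∑_{x'} p(x'|x,a,μ) min_{a'} Q(x',a'). -/
def bell [Fintype X] [Fintype A] [Nonempty A]
    (f : X → A → (X → ℝ) → ℝ) (p : X → A → (X → ℝ) → X → ℝ) (γ : ℝ)
    (μ : X → ℝ) (Q : X → A → ℝ) (x : X) (a : A) : ℝ :=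
  f x a μ + γ * ∑ x', p x a μ x' * minRow (Q x')

/-- T₂(Q,μ) = B_μ Q − Q. -/
def T2 [Fintype X] [Fintype A] [Nonempty A]
    (f : X → A → (X → ℝ) → ℝ) (p : X → A → (X → ℝ) → X → ℝ) (γ : ℝ)
    (Q : X → A → ℝ) (μ : X → ℝ) (x : X) (a : A) : ℝ :=
  bell f p γ μ Q x a - Q x a

/-- the map μ ↦ T₂(Q,μ) is Lipschitz:
‖T₂(Q,μ) − T₂(Q,μ')‖∞ ≤ (L_f + γ L_p‖Q‖∞)‖μ − μ'‖₁. -/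
theorem T2_lipschitz_in_mu [Fintype X] [Fintype A] [Nonempty X] [Nonempty A]
    (γ : ℝ) (hγ0 : 0 < γ) (hγ1 : γ < 1)
    (f : X → A → (X → ℝ) → ℝ)
    (p : X → A → (X → ℝ) → X → ℝ)
    (hp0 : ∀ x a μ x', IsProb μ → 0 ≤ p x a μ x')
    (hp1 : ∀ x a μ, IsProb μ → ∑ x', p x a μ x' = 1)
    (Lf Lp : ℝ) (hLf0 : 0 ≤ Lf) (hLp0 : 0 ≤ Lp)
    (hLf : ∀ x a μ μ', IsProb μ → IsProb μ' →
      |f x a μ - f x a μ'| ≤ Lf * l1 (fun y => μ y - μ' y))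
    (hLp : ∀ x a μ μ', IsProb μ → IsProb μ' →
      ∑ x', |p x a μ x' - p x a μ' x'| ≤ Lp * l1 (fun y => μ y - μ' y))
    (Q : X → A → ℝ) (μ μ' : X → ℝ) (hμ : IsProb μ) (hμ' : IsProb μ') :
    supQ (fun x a => T2 f p γ Q μ x a - T2 f p γ Q μ' x a)
      ≤ (Lf + γ * Lp * supQ Q) * l1 (fun x => μ x - μ' x) := by
  have hQ : ∀ x', |minRow (Q x')| ≤ supQ Q := by
    intro x'
    rw [abs_le]
    constructor
    · obtain ⟨a, _, ha⟩ := Finset.exists_mem_eq_inf' (Finset.univ_nonempty) (Q x')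
      rw [minRow, ha]
      have := Finset.le_sup' (fun xa : X × A => |Q xa.1 xa.2|) (Finset.mem_univ (x', a))
      have h2 : -(supQ Q) ≤ -|Q x' a| := neg_le_neg this
      calc -(supQ Q) ≤ -|Q x' a| := h2
        _ ≤ Q x' a := neg_abs_le _
    · have : minRow (Q x') ≤ Q x' (Classical.arbitrary A) :=
        Finset.inf'_le _ (Finset.mem_univ _)
      calc minRow (Q x') ≤ Q x' (Classical.arbitrary A) := this
        _ ≤ |Q x' (Classical.arbitrary A)| := le_abs_self _
        _ ≤ supQ Q := Finset.le_sup' (fun xa : X × A => |Q xa.1 xa.2|)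
            (Finset.mem_univ (x', Classical.arbitrary A))
  have hsupQ0 : 0 ≤ supQ Q := le_trans (abs_nonneg _) (hQ (Classical.arbitrary X))
  apply Finset.sup'_le
  rintro ⟨x, a⟩ -
  simp only [T2, bell]
  have key : |(f x a μ - f x a μ') + γ * (∑ x', p x a μ x' * minRow (Q x')
      - ∑ x', p x a μ' x' * minRow (Q x'))|
      ≤ (Lf + γ * Lp * supQ Q) * l1 (fun x => μ x - μ' x) := by
    have h1 := hLf x a μ μ' hμ hμ'
    have h2 : |∑ x', p x a μ x' * minRow (Q x') - ∑ x', p x a μ' x' * minRow (Q x')|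
        ≤ Lp * l1 (fun y => μ y - μ' y) * supQ Q := by
      rw [← Finset.sum_sub_distrib]
      calc |∑ x', (p x a μ x' * minRow (Q x') - p x a μ' x' * minRow (Q x'))|
          ≤ ∑ x', |(p x a μ x' - p x a μ' x') * minRow (Q x')| := by
            refine le_trans (Finset.abs_sum_le_sum_abs _ _) (le_of_eq ?_)
            congr 1; ext x'; ring_nf
        _ ≤ ∑ x', |p x a μ x' - p x a μ' x'| * supQ Q := by
            apply Finset.sum_le_sum
            intro x' _
            rw [abs_mul]
            exact mul_le_mul_of_nonneg_left (hQ x') (abs_nonneg _)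
        _ = (∑ x', |p x a μ x' - p x a μ' x'|) * supQ Q := by
            rw [Finset.sum_mul]
        _ ≤ Lp * l1 (fun y => μ y - μ' y) * supQ Q :=
            mul_le_mul_of_nonneg_right (hLp x a μ μ' hμ hμ') hsupQ0
    calc |(f x a μ - f x a μ') + γ * (∑ x', p x a μ x' * minRow (Q x')
        - ∑ x', p x a μ' x' * minRow (Q x'))|
        ≤ |f x a μ - f x a μ'| + |γ * (∑ x', p x a μ x' * minRow (Q x')
          - ∑ x', p x a μ' x' * minRow (Q x'))| := abs_add_le _ _
      _ ≤ Lf * l1 (fun y => μ y - μ' y)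
          + γ * (Lp * l1 (fun y => μ y - μ' y) * supQ Q) := by
          apply add_le_add h1
          rw [abs_mul, abs_of_pos hγ0]
          exact mul_le_mul_of_nonneg_left h2 hγ0.le
      _ = (Lf + γ * Lp * supQ Q) * l1 (fun x => μ x - μ' x) := by ring
  calc |(f x a μ + γ * ∑ x', p x a μ x' * minRow (Q x') - Q x a)
      - (f x a μ' + γ * ∑ x', p x a μ' x' * minRow (Q x') - Q x a)|
      = |(f x a μ - f x a μ') + γ * (∑ x', p x a μ x' * minRow (Q x')
        - ∑ x', p x a μ' x' * minRow (Q x'))| := by ring_nf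
    _ ≤ _ := key
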